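/- Let L be a Lie algebra over a field F such that the abelianization L/L² is finite-dimensional, and let h: L × L → L⊗L be a universal Lie pairing. Then Z∧(L) ∩ L² = Z⊗(L). -/

import Mathlib

universe u v w x

/-- A Lie pairing `ρ : L × L → H` of Lie algebras over a field `F`:
a bilinear map satisfying the three Lie-pairing relations. -/
structure IsLiePairing (F : Type u) [Field F] {L : Type v} {H : Type w}
    [LieRing L] [LieAlgebra F L] [LieRing H] [LieAlgebra F H]
    (ρ : L → L → H) : Prop where
  add_left : ∀ l l' k : L, ρ (l + l') k = ρ l k + ρ l' k
  add_right : ∀ l k k' : L, ρ l (k + k') = ρ l k + ρ l k'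
  smul_left : ∀ (c : F) (l k : L), ρ (c • l) k = c • ρ l k
  smul_right : ∀ (c : F) (l k : L), ρ l (c • k) = c • ρ l k
  bracket_left : ∀ l l' s : L, ρ ⁅l, l'⁆ s = ρ l ⁅l', s⁆ - ρ l' ⁅l, s⁆
  bracket_right : ∀ l s s' : L, ρ l ⁅s, s'⁆ = ρ ⁅s', l⁆ s - ρ ⁅s, l⁆ s'
  bracket_bracket : ∀ l s l' s' : L, ρ ⁅l, s⁆ ⁅l', s'⁆ = -⁅ρ s l, ρ l' s'⁆

/-- `h : L × L → T` is a universal Lie pairing: `T` plays the role of the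
nonabelian tensor square `L ⊗ L`, with `h l l' = l ⊗ l'`. -/
structure IsUniversalLiePairing (F : Type u) [Field F] (L : Type v) (T : Type w)
    [LieRing L] [LieAlgebra F L] [LieRing T] [LieAlgebra F T]
    (h : L → L → T) : Prop where
  isLiePairing : IsLiePairing F h
  universal : ∀ (Q : Type (max u v w)) [LieRing Q] [LieAlgebra F Q]
      (h' : L → L → Q), IsLiePairing F h' →
        ∃! ζ : T →ₗ⁅F⁆ Q, ∀ x y : L, ζ (h x y) = h' x y

/-! ### Auxiliary: abelian Lie algebra structure on any module -/

/-- Type synonym endowing a module with the abelian Lie algebra structure. -/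
def AbLie (V : Type x) : Type x := V

/-- The identity map into the type synonym. -/
def AbLie.of {V : Type x} : V → AbLie V := id

instance {V : Type x} [AddCommGroup V] : AddCommGroup (AbLie V) :=
  inferInstanceAs (AddCommGroup V)

instance {F : Type u} {V : Type x} [Field F] [AddCommGroup V] [Module F V] :
    Module F (AbLie V) := inferInstanceAs (Module F V)

instance {V : Type x} [AddCommGroup V] : LieRing (AbLie V) where
  bracket _ _ := 0
  add_lie _ _ _ := (add_zero 0).symm
  lie_add _ _ _ := (add_zero 0).symm
  lie_self _ := rfl
  leibniz_lie _ _ _ := (add_zero 0).symm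

instance {F : Type u} {V : Type x} [Field F] [AddCommGroup V] [Module F V] :
    LieAlgebra F (AbLie V) where
  lie_smul c x y := (smul_zero c).symm

@[simp] lemma AbLie.lie_def {V : Type x} [AddCommGroup V] (a b : AbLie V) :
    ⁅a, b⁆ = 0 := rfl

lemma AbLie.of_add {V : Type x} [AddCommGroup V] (a b : V) :
    AbLie.of (a + b) = AbLie.of a + AbLie.of b := rfl

lemma AbLie.of_smul {F : Type u} {V : Type x} [Field F] [AddCommGroup V] [Module F V]
    (c : F) (a : V) : AbLie.of (c • a) = c • AbLie.of a := rfl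

lemma AbLie.of_zero {V : Type x} [AddCommGroup V] : AbLie.of (0 : V) = 0 := rfl

/-- Projection out of `AbLie` as a linear map. -/
def AbLie.downHom (F : Type u) (V : Type x) [Field F] [AddCommGroup V] [Module F V] :
    AbLie V →ₗ[F] V where
  toFun := fun a => (a : V)
  map_add' _ _ := rfl
  map_smul' _ _ := rfl

@[simp] lemma AbLie.downHom_of {F : Type u} {V : Type x} [Field F] [AddCommGroup V]
    [Module F V] (a : V) : AbLie.downHom F V (AbLie.of a) = a := rfl

/-! ### Identities valid in any Lie pairing -/

section PairingIdentities

variable {F : Type u} {L : Type v} {T : Type w}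
  [Field F] [LieRing L] [LieAlgebra F L] [LieRing T] [LieAlgebra F T]
  {ρ : L → L → T} (hp : IsLiePairing F ρ)

include hp

lemma lp_zero_left (k : L) : ρ 0 k = 0 := by
  have h0 := hp.smul_left 0 0 k
  rwa [zero_smul, zero_smul] at h0

lemma lp_zero_right (k : L) : ρ k 0 = 0 := by
  have h0 := hp.smul_right 0 k 0
  rwa [zero_smul, zero_smul] at h0

lemma lp_neg_left (l k : L) : ρ (-l) k = -ρ l k := by
  have h0 := hp.smul_left (-1) l k
  rwa [neg_one_smul, neg_one_smul] at h0

lemma lp_neg_right (l k : L) : ρ l (-k) = -ρ l k := by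
  have h0 := hp.smul_right (-1) l k
  rwa [neg_one_smul, neg_one_smul] at h0

lemma lp_br_swap_right (l a b : L) : ρ l ⁅a, b⁆ = -ρ l ⁅b, a⁆ := by
  rw [← lie_skew b a, lp_neg_right hp, neg_neg]

lemma lp_br_swap_left (a b l : L) : ρ ⁅a, b⁆ l = -ρ ⁅b, a⁆ l := by
  rw [← lie_skew b a, lp_neg_left hp, neg_neg]

/-- The key derived identity `ρ x ⁅a,b⁆ = ρ a ⁅x,b⁆ - ρ b ⁅x,a⁆`. -/
lemma lp_C (x a b : L) : ρ x ⁅a, b⁆ = ρ a ⁅x, b⁆ - ρ b ⁅x, a⁆ := by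
  have e1 := hp.bracket_right x a b
  have e2 := hp.bracket_left b x a
  have e3 := hp.bracket_left a x b
  have e4 : ρ x ⁅b, a⁆ = -ρ x ⁅a, b⁆ := lp_br_swap_right hp x b a
  rw [e2, e3, e4] at e1
  have h0 := sub_eq_zero.mpr e1
  have h1 : (0 : T) = (ρ a ⁅x, b⁆ - ρ b ⁅x, a⁆) - ρ x ⁅a, b⁆ := by
    rw [← h0]; abel
  exact (sub_eq_zero.mp h1.symm).symm

/-- The "polar form" of the square map vanishes on brackets. -/
lemma lp_sym_br (x a b : L) : ρ x ⁅a, b⁆ + ρ ⁅a, b⁆ x = 0 := by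
  have e5 := hp.bracket_left a b x
  rw [lp_C hp x a b, e5, lp_br_swap_right hp a b x, lp_br_swap_right hp b a x]
  abel

/-- The square map vanishes on single brackets. -/
lemma lp_q_br (a b : L) : ρ ⁅a, b⁆ ⁅a, b⁆ = 0 := by
  have e := hp.bracket_bracket b a a b
  rw [lie_self, neg_zero] at e
  rw [lp_br_swap_left hp a b, e, neg_zero]

end PairingIdentities

section SpanIdentities

variable {F : Type u} {L : Type v} {T : Type w}
  [Field F] [LieRing L] [LieAlgebra F L] [LieRing T] [LieAlgebra F T]
  {ρ : L → L → T} (hp : IsLiePairing F ρ)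

/-- The generating set of the derived subalgebra, as in
`LieSubmodule.lieIdeal_oper_eq_linear_span'`. -/
def brSet (F : Type u) (L : Type v) [Field F] [LieRing L] [LieAlgebra F L] : Set L :=
  { m | ∃ x ∈ (⊤ : LieIdeal F L), ∃ n ∈ (⊤ : LieIdeal F L), ⁅x, n⁆ = m }

include hp

lemma lp_P1 {d : L} (hd : d ∈ Submodule.span F (brSet F L)) (x : L) :
    ρ x d = -ρ d x := by
  induction hd using Submodule.span_induction with
  | mem m hm =>
    obtain ⟨a, -, b, -, rfl⟩ := hm
    exact eq_neg_of_add_eq_zero_left (lp_sym_br hp x a b)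
  | zero => rw [lp_zero_right hp, lp_zero_left hp, neg_zero]
  | add d d' _ _ h1 h2 =>
    rw [hp.add_right, hp.add_left, h1, h2]; abel
  | smul c d _ h1 =>
    rw [hp.smul_right, hp.smul_left, h1, smul_neg]

lemma lp_P3 {d : L} (hd : d ∈ Submodule.span F (brSet F L)) : ρ d d = 0 := by
  induction hd using Submodule.span_induction with
  | mem m hm =>
    obtain ⟨a, -, b, -, rfl⟩ := hm
    exact lp_q_br hp a b
  | zero => exact lp_zero_left hp 0
  | add d d' hd hd' h1 h2 =>
    rw [hp.add_left, hp.add_right, hp.add_right, h1, h2,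
      lp_P1 hp hd' d]
    abel
  | smul c d _ h1 =>
    rw [hp.smul_left, hp.smul_right, h1, smul_zero, smul_zero]

/-- For `d` in the derived subalgebra, `ρ (x + d) (x + d) = ρ x x`. -/
lemma lp_sq_shift {d : L} (hd : d ∈ Submodule.span F (brSet F L)) (x : L) :
    ρ (x + d) (x + d) = ρ x x := by
  rw [hp.add_left, hp.add_right, hp.add_right, lp_P1 hp hd x, lp_P3 hp hd]
  abel

end SpanIdentities

/-- derived ideal membership and span membership coincide -/
lemma mem_brSpan_iff {F : Type u} {L : Type v} [Field F] [LieRing L] [LieAlgebra F L]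
    (l : L) :
    l ∈ ⁅(⊤ : LieIdeal F L), (⊤ : LieIdeal F L)⁆ ↔
      l ∈ Submodule.span F (brSet F L) := by
  rw [← LieSubmodule.mem_toSubmodule, LieSubmodule.lieIdeal_oper_eq_linear_span']
  rfl

/-- In a vector space, `v ⊗ v = 0` implies `v = 0`. -/
lemma tmul_self_eq_zero_imp {F : Type u} {V : Type v} [Field F] [AddCommGroup V]
    [Module F V] {v : V} (hv : v ⊗ₜ[F] v = 0) : v = 0 := by
  by_contra hne
  classical
  let b := Module.Basis.ofVectorSpace F V
  have hr : b.repr v ≠ 0 := fun hz => hne (by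
    have := congrArg b.repr.symm hz
    simpa using this)
  obtain ⟨i, hi⟩ : ∃ i, b.repr v i ≠ 0 := by
    by_contra hall
    push_neg at hall
    exact hr (Finsupp.ext fun i => by simpa using hall i)
  have hmap := congrArg
    ((TensorProduct.lid F F).toLinearMap ∘ₗ TensorProduct.map (b.coord i) (b.coord i)) hv
  simp only [LinearMap.comp_apply, TensorProduct.map_tmul, map_zero] at hmap
  rw [LinearEquiv.coe_toLinearMap, TensorProduct.lid_tmul] at hmap
  have : b.repr v i * b.repr v i = 0 := by
    simpa [Module.Basis.coord_apply, smul_eq_mul] using hmap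
  exact hi (mul_self_eq_zero.mp this)

/-- Double-sum comparison via the swap involution. -/
lemma sum_sq_eq {F : Type u} {T : Type w} [Field F] [AddCommGroup T] [Module F T]
    {n : ℕ} (c : Fin n → F) (H G : Fin n → Fin n → T)
    (hdiag : ∀ i, G i i = H i i)
    (hoff : ∀ i j, i ≠ j → G i j + G j i = H i j + H j i) :
    ∑ i, ∑ j, (c i * c j) • H i j = ∑ i, ∑ j, (c i * c j) • G i j := by
  classical
  have key : ∑ p ∈ Finset.univ ×ˢ Finset.univ,
      (c p.1 * c p.2) • (H p.1 p.2 - G p.1 p.2) = 0 := by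
    apply Finset.sum_ninvolution Prod.swap
    · intro p
      rcases eq_or_ne p.1 p.2 with hq | hq
      · have hz : H p.1 p.2 - G p.1 p.2 = 0 := by
          rw [hq, hdiag, sub_self]
        have hz' : H p.2 p.1 - G p.2 p.1 = 0 := by
          rw [hq, hdiag, sub_self]
        simp [Prod.swap, hz, hz']
      · have hsum : (H p.1 p.2 - G p.1 p.2) + (H p.2 p.1 - G p.2 p.1) = 0 := by
          have h1 : (H p.1 p.2 - G p.1 p.2) + (H p.2 p.1 - G p.2 p.1)
              = (H p.1 p.2 + H p.2 p.1) - (G p.1 p.2 + G p.2 p.1) := by abel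
          rw [h1, hoff _ _ hq, sub_self]
        have h2 : (c p.2 * c p.1) = (c p.1 * c p.2) := mul_comm _ _
        calc (c p.1 * c p.2) • (H p.1 p.2 - G p.1 p.2)
              + (c p.swap.1 * c p.swap.2) • (H p.swap.1 p.swap.2 - G p.swap.1 p.swap.2)
            = (c p.1 * c p.2) • (H p.1 p.2 - G p.1 p.2)
              + (c p.1 * c p.2) • (H p.2 p.1 - G p.2 p.1) := by
              simp only [Prod.swap]; rw [h2]
          _ = (c p.1 * c p.2) • ((H p.1 p.2 - G p.1 p.2) + (H p.2 p.1 - G p.2 p.1)) := by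
              rw [smul_add]
          _ = 0 := by rw [hsum, smul_zero]
    · intro p hne hsw
      apply hne
      have h1 : p.2 = p.1 := congrArg Prod.fst hsw
      have hz : H p.1 p.2 - G p.1 p.2 = 0 := by
        rw [← h1, hdiag, sub_self]
      rw [hz, smul_zero]
    · intro p; exact Finset.mem_product.mpr ⟨Finset.mem_univ _, Finset.mem_univ _⟩
    · intro p; exact Prod.swap_swap p
  have key2 : ∑ p ∈ Finset.univ ×ˢ Finset.univ, ((c p.1 * c p.2) • H p.1 p.2
      - (c p.1 * c p.2) • G p.1 p.2) = 0 := by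
    simpa only [smul_sub] using key
  rw [Finset.sum_sub_distrib] at key2
  have := sub_eq_zero.mp key2
  rw [Finset.sum_product' (f := fun i j => (c i * c j) • H i j),
    Finset.sum_product' (f := fun i j => (c i * c j) • G i j)] at this
  exact this

/-- If `L/L²` is finite-dimensional then `Z∧(L) ∩ L² = Z⊗(L)`, where
`Z∧(L) = {l | l∧l' = 0 for all l'}` (i.e. `l⊗l'` lies in the square `L□L`
for every `l'`) and `Z⊗(L) = {l | l⊗l' = 0 for all l'}`. -/
theorem exteriorCenter_inter_derived_eq_tensorCenter (F : Type u) [Field F]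
    (L : Type v) (T : Type w) [LieRing L] [LieAlgebra F L]
    [LieRing T] [LieAlgebra F T]
    (h : L → L → T) (hh : IsUniversalLiePairing F L T h)
    [FiniteDimensional F (L ⧸ ⁅(⊤ : LieIdeal F L), (⊤ : LieIdeal F L)⁆)] :
    {l : L | ∀ l' : L, h l l' ∈ Submodule.span F {x : T | ∃ m : L, x = h m m}} ∩
        {l : L | l ∈ ⁅(⊤ : LieIdeal F L), (⊤ : LieIdeal F L)⁆} =
      {l : L | ∀ l' : L, h l l' = 0} := by
  classical
  have hp := hh.isLiePairing
  -- the abelianization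
  let A := L ⧸ ⁅(⊤ : LieIdeal F L), (⊤ : LieIdeal F L)⁆
  let fA : L →ₗ[F] A :=
    (LieSubmodule.Quotient.mk' ⁅(⊤ : LieIdeal F L), (⊤ : LieIdeal F L)⁆).toLinearMap
  have hfA_zero : ∀ x y : L, fA ⁅x, y⁆ = 0 := fun x y =>
    (LieSubmodule.Quotient.mk_eq_zero _).mpr
      (LieSubmodule.lie_mem_lie (LieSubmodule.mem_top x) (LieSubmodule.mem_top y))
  -- the abelian target
  let Q : Type (max u v w) := AbLie (ULift.{max u w} (TensorProduct F A A))
  let ρ₂ : L → L → Q := fun x y => AbLie.of (ULift.up (fA x ⊗ₜ[F] fA y))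
  have hρ₂ : IsLiePairing F ρ₂ := by
    constructor
    · intro l l' k
      show AbLie.of (ULift.up (fA (l + l') ⊗ₜ[F] fA k)) = _
      rw [map_add, TensorProduct.add_tmul]
      rfl
    · intro l k k'
      show AbLie.of (ULift.up (fA l ⊗ₜ[F] fA (k + k'))) = _
      rw [map_add, TensorProduct.tmul_add]
      rfl
    · intro c l k
      show AbLie.of (ULift.up (fA (c • l) ⊗ₜ[F] fA k)) = _
      rw [map_smul, ← TensorProduct.smul_tmul']
      rfl
    · intro c l k
      show AbLie.of (ULift.up (fA l ⊗ₜ[F] fA (c • k))) = _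
      rw [map_smul, TensorProduct.tmul_smul]
      rfl
    · intro l l' s
      show AbLie.of (ULift.up (fA ⁅l, l'⁆ ⊗ₜ[F] fA s)) = _
      rw [hfA_zero, TensorProduct.zero_tmul]
      show (0 : Q) = ρ₂ l ⁅l', s⁆ - ρ₂ l' ⁅l, s⁆
      show (0 : Q) = AbLie.of (ULift.up (fA l ⊗ₜ[F] fA ⁅l', s⁆))
        - AbLie.of (ULift.up (fA l' ⊗ₜ[F] fA ⁅l, s⁆))
      rw [hfA_zero, hfA_zero, TensorProduct.tmul_zero, TensorProduct.tmul_zero]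
      show (0 : Q) = 0 - 0
      rw [sub_zero]
    · intro l s s'
      show AbLie.of (ULift.up (fA l ⊗ₜ[F] fA ⁅s, s'⁆)) = _
      rw [hfA_zero, TensorProduct.tmul_zero]
      show (0 : Q) = AbLie.of (ULift.up (fA ⁅s', l⁆ ⊗ₜ[F] fA s))
        - AbLie.of (ULift.up (fA ⁅s, l⁆ ⊗ₜ[F] fA s'))
      rw [hfA_zero, hfA_zero, TensorProduct.zero_tmul, TensorProduct.zero_tmul]
      show (0 : Q) = 0 - 0
      rw [sub_zero]
    · intro l s l' s'
      show AbLie.of (ULift.up (fA ⁅l, s⁆ ⊗ₜ[F] fA ⁅l', s'⁆)) = -⁅ρ₂ s l, ρ₂ l' s'⁆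
      rw [hfA_zero, TensorProduct.zero_tmul, AbLie.lie_def, neg_zero]
      rfl
  obtain ⟨ζ, hζ, -⟩ := hh.universal Q ρ₂ hρ₂
  -- projection from Q back to the tensor product
  let dQ : Q →ₗ[F] TensorProduct F A A :=
    (ULift.moduleEquiv : ULift.{max u w} (TensorProduct F A A) ≃ₗ[F] _).toLinearMap ∘ₗ
      AbLie.downHom F (ULift.{max u w} (TensorProduct F A A))
  have hdQ : ∀ x y : L, dQ (ζ (h x y)) = fA x ⊗ₜ[F] fA y := by
    intro x y
    rw [hζ]
    rfl
  ext l
  simp only [Set.mem_inter_iff, Set.mem_setOf_eq]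
  constructor
  · rintro ⟨hW, hI⟩
    -- the hard direction
    intro l'
    -- basis of the abelianization and lifts
    let n := Module.finrank F A
    let b : Module.Basis (Fin n) F A := Module.finBasis F A
    have hsur : Function.Surjective fA :=
      LieSubmodule.Quotient.surjective_mk' _
    choose e he using fun i => hsur (b i)
    let g : Fin n × Fin n → T := fun p =>
      if p.1 = p.2 then h (e p.1) (e p.1)
      else if p.1 < p.2 then h (e p.1) (e p.2) + h (e p.2) (e p.1) else 0
    let θ : TensorProduct F A A →ₗ[F] T := (b.tensorProduct b).constr F g
    let η : T →ₗ[F] T := θ ∘ₗ dQ ∘ₗ ζ.toLinearMap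
    have hθb : ∀ i j, θ (b i ⊗ₜ[F] b j) = g (i, j) := by
      intro i j
      have hc := (b.tensorProduct b).constr_basis F g (i, j)
      rwa [Module.Basis.tensorProduct_apply] at hc
    have hη : ∀ x y : L, η (h x y) = θ (fA x ⊗ₜ[F] fA y) := by
      intro x y
      show θ (dQ (ζ (h x y))) = _
      rw [hdQ]
    -- the bilinear map associated to h
    let H₂ : L →ₗ[F] L →ₗ[F] T :=
      LinearMap.mk₂ F h hp.add_left hp.smul_left hp.add_right hp.smul_right
    -- key: η fixes all squares
    have key1 : ∀ m : L, η (h m m) = h m m := by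
      intro m
      set c : Fin n → F := fun i => b.repr (fA m) i with hc
      set m₀ : L := ∑ i, c i • e i with hm₀def
      have hfm₀ : fA m₀ = fA m := by
        rw [hm₀def, map_sum]
        have : ∀ i, fA (c i • e i) = c i • b i := by
          intro i; rw [map_smul, he]
        rw [Finset.sum_congr rfl fun i _ => this i]
        exact b.sum_repr (fA m)
      have hdmem : m - m₀ ∈ Submodule.span F (brSet F L) := by
        rw [← mem_brSpan_iff]
        have : fA (m - m₀) = 0 := by rw [map_sub, hfm₀, sub_self]
        exact (LieSubmodule.Quotient.mk_eq_zero _).mp this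
      have hmm : h m m = h m₀ m₀ := by
        have hmeq : m = m₀ + (m - m₀) := by abel
        calc h m m = h (m₀ + (m - m₀)) (m₀ + (m - m₀)) := by rw [← hmeq]
          _ = h m₀ m₀ := lp_sq_shift hp hdmem m₀
      -- expand h m₀ m₀ as a double sum
      have hsum1 : h m₀ m₀ = ∑ i, ∑ j, (c i * c j) • h (e i) (e j) := by
        show H₂ m₀ m₀ = _
        rw [hm₀def]
        simp only [map_sum, LinearMap.map_smul₂, map_smul, LinearMap.sum_apply,
          LinearMap.smul_apply, Finset.smul_sum, smul_smul, LinearMap.mk₂_apply]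
        rw [Finset.sum_comm]
        apply Finset.sum_congr rfl; intro i _
        apply Finset.sum_congr rfl; intro j _
        rw [mul_comm (c j) (c i)]
        rfl
      -- expand θ (fA m ⊗ fA m) as a double sum
      have hvrep : fA m = ∑ i, c i • b i := (b.sum_repr (fA m)).symm
      have hsum2 : θ (fA m ⊗ₜ[F] fA m) = ∑ i, ∑ j, (c i * c j) • g (i, j) := by
        rw [hvrep, TensorProduct.sum_tmul, map_sum]
        apply Finset.sum_congr rfl
        intro i _
        rw [TensorProduct.tmul_sum, map_sum]
        apply Finset.sum_congr rfl
        intro j _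
        rw [TensorProduct.tmul_smul, ← TensorProduct.smul_tmul', map_smul, map_smul,
          hθb, smul_smul, mul_comm (c j) (c i)]
      -- compare the two double sums
      have hcompare : ∑ i, ∑ j, (c i * c j) • h (e i) (e j)
          = ∑ i, ∑ j, (c i * c j) • g (i, j) := by
        apply sum_sq_eq c (fun i j => h (e i) (e j)) (fun i j => g (i, j))
        · intro i
          show g (i, i) = h (e i) (e i)
          simp only [g, if_pos rfl]
        · intro i j hne
          show g (i, j) + g (j, i) = h (e i) (e j) + h (e j) (e i)
          rcases lt_or_gt_of_ne hne with hlt | hgt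
          · simp only [g]
            rw [if_neg hne, if_pos hlt, if_neg hne.symm, if_neg (not_lt.mpr hlt.le),
              add_zero]
          · simp only [g]
            rw [if_neg hne, if_neg (not_lt.mpr hgt.le), if_neg hne.symm, if_pos hgt,
              zero_add, add_comm]
      rw [hη, hsum2, ← hcompare, ← hsum1, ← hmm]
    -- η is the identity on the span of squares
    have key3 : ∀ t ∈ Submodule.span F {x : T | ∃ m : L, x = h m m}, η t = t := by
      intro t ht
      induction ht using Submodule.span_induction with
      | mem t hm => obtain ⟨m, rfl⟩ := hm; exact key1 m
      | zero => exact map_zero η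
      | add x y _ _ h1 h2 => rw [map_add, h1, h2]
      | smul c x _ h1 => rw [map_smul, h1]
    have hl0 : fA l = 0 := (LieSubmodule.Quotient.mk_eq_zero _).mpr hI
    have : η (h l l') = 0 := by
      rw [hη, hl0, TensorProduct.zero_tmul, map_zero]
    rw [← key3 (h l l') (hW l'), this]
  · intro hz
    constructor
    · intro l'
      rw [hz l']
      exact Submodule.zero_mem _
    · have h0 : fA l ⊗ₜ[F] fA l = 0 := by
        rw [← hdQ l l, hz l, map_zero ζ, map_zero]
      have := tmul_self_eq_zero_imp h0
      exact (LieSubmodule.Quotient.mk_eq_zero _).mp this
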